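/- Every separable metric space has a proper dyadic subbase. -/

import Mathlib

open TopologicalSpace Set

def dyadicBd {X : Type*} (S : ℕ → Bool → Set X) (k : ℕ) : Set X :=
  (S k false ∪ S k true)ᶜ
def dyadicOpen {X : Type*} (S : ℕ → Bool → Set X) (dom : Finset ℕ) (σ : ℕ → Bool) : Set X :=
  ⋂ k ∈ dom, S k (σ k)
def dyadicClosed {X : Type*} (S : ℕ → Bool → Set X) (dom : Finset ℕ) (σ : ℕ → Bool) : Set X :=
  ⋂ k ∈ dom, (S k (σ k) ∪ dyadicBd S k)

def badSet {X : Type*} [TopologicalSpace X] (T : Set X) (g : X → ℝ) : Set ℝ :=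
  {r | ∃ x ∈ T, g x = r ∧
    (x ∉ closure (T ∩ {y | g y < r}) ∨ x ∉ closure (T ∩ {y | r < g y}))}

lemma countable_badSet {X : Type*} [TopologicalSpace X] [SecondCountableTopology X]
    (T : Set X) (g : X → ℝ) : (badSet T g).Countable := by
  classical
  set B := countableBasis X with hB
  have hmin : ∀ r ∈ badSet T g, ∃ V ∈ B,
      (∃ x ∈ V ∩ T, g x = r ∧ (∀ y ∈ V ∩ T, r ≤ g y)) ∨
      (∃ x ∈ V ∩ T, g x = r ∧ (∀ y ∈ V ∩ T, g y ≤ r)) := by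
    rintro r ⟨x, hxT, hgx, hcase⟩
    rcases hcase with h | h
    · rw [mem_closure_iff_nhds] at h
      push_neg at h
      obtain ⟨U, hU, hdisj⟩ := h
      obtain ⟨V, hVB, hxV, hVU⟩ := (isBasis_countableBasis X).mem_nhds_iff.mp hU
      refine ⟨V, hVB, Or.inl ⟨x, ⟨hxV, hxT⟩, hgx, ?_⟩⟩
      intro y hy
      by_contra hlt
      exact Set.eq_empty_iff_forall_notMem.mp hdisj y ⟨hVU hy.1, hy.2, lt_of_not_ge hlt⟩
    · rw [mem_closure_iff_nhds] at h
      push_neg at h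
      obtain ⟨U, hU, hdisj⟩ := h
      obtain ⟨V, hVB, hxV, hVU⟩ := (isBasis_countableBasis X).mem_nhds_iff.mp hU
      refine ⟨V, hVB, Or.inr ⟨x, ⟨hxV, hxT⟩, hgx, ?_⟩⟩
      intro y hy
      by_contra hlt
      exact Set.eq_empty_iff_forall_notMem.mp hdisj y ⟨hVU hy.1, hy.2, lt_of_not_ge hlt⟩
  have hsub : badSet T g ⊆
      (⋃ V ∈ B, {r | ∃ x ∈ V ∩ T, g x = r ∧ ∀ y ∈ V ∩ T, r ≤ g y}) ∪
      (⋃ V ∈ B, {r | ∃ x ∈ V ∩ T, g x = r ∧ ∀ y ∈ V ∩ T, g y ≤ r}) := by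
    intro r hr
    obtain ⟨V, hVB, h | h⟩ := hmin r hr
    · exact Or.inl (Set.mem_biUnion hVB h)
    · exact Or.inr (Set.mem_biUnion hVB h)
  refine Set.Countable.mono hsub (Set.Countable.union ?_ ?_) <;>
    refine Set.Countable.biUnion (countable_countableBasis X) (fun V _ => ?_)
  · refine Set.Subsingleton.countable ?_
    rintro r ⟨x, hx, hgx, hmin⟩ r' ⟨x', hx', hgx', hmin'⟩
    have h1 : r ≤ g x' := hmin x' hx'
    have h2 : r' ≤ g x := hmin' x hx
    rw [hgx'] at h1; rw [hgx] at h2; linarith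
  · refine Set.Subsingleton.countable ?_
    rintro r ⟨x, hx, hgx, hmax⟩ r' ⟨x', hx', hgx', hmax'⟩
    have h1 : g x' ≤ r := hmax x' hx'
    have h2 : g x ≤ r' := hmax' x hx
    rw [hgx'] at h1; rw [hgx] at h2; linarith

/-- decode a natural number into (center index, rational interval endpoints) -/
noncomputable def dsDecode (n : ℕ) : ℕ × ℚ × ℚ := (Denumerable.eqv (ℕ × ℚ × ℚ)).symm n

noncomputable def dsCtr {X : Type*} (c : ℕ → X) (n : ℕ) : X := c (dsDecode n).1

/-- the target interval for the n-th radius -/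
noncomputable def dsJ (n : ℕ) : Set ℝ :=
  if ((dsDecode n).2.1 : ℝ) < ((dsDecode n).2.2 : ℝ)
  then Set.Ioo ((dsDecode n).2.1 : ℝ) ((dsDecode n).2.2 : ℝ) else Set.Ioo 0 1

lemma dsJ_not_countable (n : ℕ) : ¬ (dsJ n).Countable := by
  have key : ∀ (a b : ℝ), a < b → ¬ (Set.Ioo a b).Countable := by
    intro a b hab hc
    have h1 := Cardinal.mk_Ioo_real hab
    have h2 := hc.le_aleph0
    rw [h1] at h2
    exact absurd h2 (not_le.mpr Cardinal.aleph0_lt_continuum)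
  unfold dsJ
  split <;> rename_i h
  · exact key _ _ h
  · exact key _ _ (by norm_num)

noncomputable def dsS {X : Type*} [MetricSpace X] (c : ℕ → X) (r : ℕ → ℝ) (n : ℕ) :
    Bool → Set X
  | false => {x | dist x (dsCtr c n) < r n}
  | true => {x | r n < dist x (dsCtr c n)}

noncomputable def dsBad {X : Type*} [MetricSpace X] (c : ℕ → X) (r : ℕ → ℝ) (n : ℕ) : Set ℝ :=
  ⋃ d ∈ (Finset.range n).powerset, ⋃ t ∈ d.powerset,
    badSet (dyadicClosed (dsS c r) d (fun k => decide (k ∈ t))) (fun x => dist x (dsCtr c n))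

lemma dsBad_countable {X : Type*} [MetricSpace X] [SecondCountableTopology X]
    (c : ℕ → X) (r : ℕ → ℝ) (n : ℕ) : (dsBad c r n).Countable := by
  refine Set.Countable.biUnion ((Finset.range n).powerset : Finset (Finset ℕ)).countable_toSet
    (fun d _ => ?_)
  exact Set.Countable.biUnion d.powerset.countable_toSet
    (fun t _ => countable_badSet _ _)

lemma ds_exists_good {X : Type*} [MetricSpace X] [SecondCountableTopology X]
    (c : ℕ → X) (r : ℕ → ℝ) (n : ℕ) : ∃ x, x ∈ dsJ n ∧ x ∉ dsBad c r n := by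
  have h1 : ¬ (dsJ n).Countable := dsJ_not_countable n
  have h2 : (dsBad c r n).Countable := dsBad_countable c r n
  by_contra h
  push_neg at h
  exact h1 (h2.mono (fun x hx => h x hx))

noncomputable def dsR {X : Type*} [MetricSpace X] [SecondCountableTopology X] (c : ℕ → X) :
    ℕ → ℝ
  | n => Classical.choose (ds_exists_good c (fun m => if _ : m < n then dsR c m else 0) n)
termination_by n => n

lemma dsS_congr {X : Type*} [MetricSpace X] (c : ℕ → X) {r r' : ℕ → ℝ} {k : ℕ}
    (h : r k = r' k) : dsS c r k = dsS c r' k := by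
  funext b; cases b <;> simp [dsS, h]

lemma dyadicClosed_congr_r {X : Type*} [MetricSpace X] (c : ℕ → X) {r r' : ℕ → ℝ}
    {d : Finset ℕ} (h : ∀ k ∈ d, r k = r' k) (σ : ℕ → Bool) :
    dyadicClosed (dsS c r) d σ = dyadicClosed (dsS c r') d σ := by
  unfold dyadicClosed dyadicBd
  refine Set.iInter₂_congr (fun k hk => ?_)
  rw [dsS_congr c (h k hk)]

lemma dsBad_congr {X : Type*} [MetricSpace X] (c : ℕ → X) {r r' : ℕ → ℝ} {n : ℕ}
    (h : ∀ m < n, r m = r' m) : dsBad c r n = dsBad c r' n := by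
  unfold dsBad
  refine Set.iUnion₂_congr (fun d hd => Set.iUnion₂_congr (fun t _ => ?_))
  rw [dyadicClosed_congr_r c (fun k hk => h k (Finset.mem_range.mp
    (Finset.mem_powerset.mp hd hk)))]

lemma dsR_spec {X : Type*} [MetricSpace X] [SecondCountableTopology X] (c : ℕ → X) (n : ℕ) :
    dsR c n ∈ dsJ n ∧ dsR c n ∉ dsBad c (dsR c) n := by
  have h := Classical.choose_spec (ds_exists_good c (fun m => if _ : m < n then dsR c m else 0) n)
  have hu : dsR c n = Classical.choose
      (ds_exists_good c (fun m => if _ : m < n then dsR c m else 0) n) := by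
    rw [dsR]
  rw [hu]
  refine ⟨h.1, ?_⟩
  have : dsBad c (fun m => if _ : m < n then dsR c m else 0) n = dsBad c (dsR c) n := by
    exact dsBad_congr c (fun m hm => by simp [hm])
  rw [← this]
  exact h.2

section main
variable {X : Type*} [MetricSpace X] [SecondCountableTopology X]

lemma dsS_isOpen (c : ℕ → X) (r : ℕ → ℝ) (n : ℕ) (b : Bool) : IsOpen (dsS c r n b) := by
  cases b
  · exact isOpen_lt (continuous_id.dist continuous_const) continuous_const
  · exact isOpen_lt continuous_const (continuous_id.dist continuous_const)

lemma dsS_disj (c : ℕ → X) (r : ℕ → ℝ) (n : ℕ) : dsS c r n false ∩ dsS c r n true = ∅ := by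
  ext x
  simp only [dsS, Set.mem_inter_iff, Set.mem_setOf_eq, Set.mem_empty_iff_false, iff_false]
  rintro ⟨h1, h2⟩; linarith

lemma dsBd_eq (c : ℕ → X) (r : ℕ → ℝ) (n : ℕ) :
    dyadicBd (dsS c r) n = {x | dist x (dsCtr c n) = r n} := by
  ext x
  simp only [dyadicBd, dsS, Set.mem_compl_iff, Set.mem_union, Set.mem_setOf_eq]
  push_neg
  constructor
  · rintro ⟨h1, h2⟩; linarith
  · rintro h; exact ⟨le_of_eq h.symm, le_of_eq h⟩

lemma dyadicClosed_isClosed (c : ℕ → X) (r : ℕ → ℝ) (d : Finset ℕ) (σ : ℕ → Bool) :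
    IsClosed (dyadicClosed (dsS c r) d σ) := by
  refine isClosed_biInter (fun k _ => ?_)
  have : dsS c r k (σ k) ∪ dyadicBd (dsS c r) k = (dsS c r k (!(σ k)))ᶜ := by
    ext x
    have hd := dsS_disj c r k
    cases hσ : σ k <;>
    · simp only [dyadicBd, Set.mem_union, Set.mem_compl_iff, Bool.not_false, Bool.not_true]
      constructor
      · rintro (h | h) hh
        · exact Set.eq_empty_iff_forall_notMem.mp hd x (by constructor <;> first | exact h | exact hh)
        · exact h (by first | exact Or.inl hh | exact Or.inr hh)
      · intro h
        by_cases hx : x ∈ dsS c r k false ∪ dsS c r k true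
        · rcases hx with hx | hx
          · first | exact Or.inl hx | exact absurd hx h
          · first | exact absurd hx h | exact Or.inl hx
        · exact Or.inr hx
  rw [this]
  exact (dsS_isOpen c r k _).isClosed_compl

lemma closure_dyadicOpen_subset (c : ℕ → X) (r : ℕ → ℝ) (d : Finset ℕ) (σ : ℕ → Bool) :
    closure (dyadicOpen (dsS c r) d σ) ⊆ dyadicClosed (dsS c r) d σ := by
  refine closure_minimal ?_ (dyadicClosed_isClosed c r d σ)
  exact Set.iInter₂_mono (fun k _ => Set.subset_union_left)

lemma dyadicClosed_anti (S : ℕ → Bool → Set X) {d e : Finset ℕ} (h : e ⊆ d) (σ : ℕ → Bool) :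
    dyadicClosed S d σ ⊆ dyadicClosed S e σ :=
  Set.biInter_subset_biInter_left (by exact_mod_cast h)

lemma dyadicClosed_congr_σ (S : ℕ → Bool → Set X) (d : Finset ℕ) {σ σ' : ℕ → Bool}
    (h : ∀ k ∈ d, σ k = σ' k) : dyadicClosed S d σ = dyadicClosed S d σ' := by
  unfold dyadicClosed
  exact Set.iInter₂_congr (fun k hk => by rw [h k hk])

end main

lemma ds_proper {X : Type*} [MetricSpace X] [SecondCountableTopology X] (c : ℕ → X) :
    ∀ (N : ℕ) (d : Finset ℕ), d ⊆ Finset.range N → ∀ σ : ℕ → Bool,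
      dyadicClosed (dsS c (dsR c)) d σ = closure (dyadicOpen (dsS c (dsR c)) d σ) := by
  classical
  set r := dsR c with hr
  set S := dsS c r with hS
  intro N
  induction N with
  | zero =>
    intro d hd σ
    have : d = ∅ := Finset.subset_empty.mp (by simpa using hd)
    subst this
    simp [dyadicClosed, dyadicOpen]
  | succ N ih =>
    intro d hd σ
    by_cases hN : N ∈ d
    · -- split off the top index N
      set e := d.erase N with he
      have hes : e ⊆ Finset.range N := by
        intro k hk
        have hk1 := Finset.mem_erase.mp hk
        have hk2 := Finset.mem_range.mp (hd hk1.2)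
        exact Finset.mem_range.mpr (lt_of_le_of_ne (Nat.lt_succ_iff.mp hk2) hk1.1)
      have hIH := ih e hes σ
      have hdec : d = insert N e := (Finset.insert_erase hN).symm
      have hopen : dyadicOpen S d σ = S N (σ N) ∩ dyadicOpen S e σ := by
        rw [hdec]
        unfold dyadicOpen
        exact Finset.set_biInter_insert N e _
      refine subset_antisymm ?_ (closure_dyadicOpen_subset c r d σ)
      intro x hx
      have hxe : x ∈ dyadicClosed S e σ :=
        dyadicClosed_anti S (Finset.erase_subset _ _) σ hx
      have hxN : x ∈ S N (σ N) ∪ dyadicBd S N := by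
        have := Set.mem_iInter₂.mp hx N hN
        exact this
      rw [hopen]
      rcases hxN with hxN | hxN
      · have h1 : x ∈ S N (σ N) ∩ closure (dyadicOpen S e σ) := ⟨hxN, hIH ▸ hxe⟩
        exact (dsS_isOpen c r N (σ N)).inter_closure h1
      · -- boundary case
        have hdist : dist x (dsCtr c N) = r N := by
          have := (dsBd_eq c r N) ▸ hxN
          exact this
        have hbad := (dsR_spec c N).2
        have hmem : e ∈ (Finset.range N).powerset := Finset.mem_powerset.mpr hes
        set t := e.filter (fun k => σ k = true) with ht
        have htmem : t ∈ e.powerset := Finset.mem_powerset.mpr (Finset.filter_subset _ _)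
        have hnb : r N ∉ badSet (dyadicClosed S e (fun k => decide (k ∈ t)))
            (fun y => dist y (dsCtr c N)) := by
          intro hb
          exact hbad (Set.mem_biUnion hmem (Set.mem_biUnion htmem hb))
        have hTe : dyadicClosed S e (fun k => decide (k ∈ t)) = dyadicClosed S e σ := by
          refine dyadicClosed_congr_σ S e (fun k hk => ?_)
          simp only [ht, Finset.mem_filter, hk, true_and]
          cases hσ : σ k <;> simp
        rw [hTe] at hnb
        unfold badSet at hnb
        push_neg at hnb
        simp only [Set.mem_setOf_eq, not_exists, not_and, not_or, not_not] at hnb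
        have hkey := hnb x hxe hdist
        set T := dyadicClosed S e σ with hT
        have hlt : T ∩ {y | dist y (dsCtr c N) < r N} = T ∩ S N false := rfl
        have hgt : T ∩ {y | r N < dist y (dsCtr c N)} = T ∩ S N true := rfl
        have hxcl : x ∈ closure (T ∩ S N (σ N)) := by
          cases hσ : σ N
          · rw [← hlt]; exact hkey.1
          · rw [← hgt]; exact hkey.2
        have hsub : T ∩ S N (σ N) ⊆ closure (S N (σ N) ∩ dyadicOpen S e σ) := by
          rw [hIH]
          intro y hy
          exact (dsS_isOpen c r N (σ N)).inter_closure ⟨hy.2, hy.1⟩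
        have hfin := closure_mono hsub hxcl
        rwa [closure_closure] at hfin
    · -- N not in dom
      exact ih d (fun k hk => Finset.mem_range.mpr
        (lt_of_le_of_ne (Nat.lt_succ_iff.mp (Finset.mem_range.mp (hd hk))) (fun h => hN (h ▸ hk)))) σ

lemma ds_generate {X : Type*} [MetricSpace X] [SecondCountableTopology X]
    (c : ℕ → X) (hc : DenseRange c) :
    (inferInstance : TopologicalSpace X) =
      TopologicalSpace.generateFrom {U : Set X | ∃ n a, U = dsS c (dsR c) n a} := by
  set r := dsR c with hr
  refine le_antisymm (le_generateFrom ?_) ?_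
  · rintro s ⟨n, a, rfl⟩
    exact dsS_isOpen c r n a
  · rw [TopologicalSpace.le_def]
    intro U hU
    have key : ∀ x ∈ U, ∃ n, x ∈ dsS c r n false ∧ dsS c r n false ⊆ U := by
      intro x hx
      obtain ⟨ε, hε, hball⟩ := Metric.isOpen_iff.mp hU x hx
      obtain ⟨i, hi⟩ := Metric.denseRange_iff.mp hc x (ε/4) (by linarith)
      obtain ⟨a, ha1, ha2⟩ := exists_rat_btwn hi
      obtain ⟨b, hb1, hb2⟩ := exists_rat_btwn (show (a:ℝ) < ε/2 by linarith)
      set n := Denumerable.eqv (ℕ × ℚ × ℚ) (i, a, b) with hn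
      have hdec : dsDecode n = (i, a, b) := by
        rw [hn, dsDecode, Equiv.symm_apply_apply]
      have hctr : dsCtr c n = c i := by rw [dsCtr, hdec]
      have hJ : dsJ n = Set.Ioo (a:ℝ) (b:ℝ) := by
        rw [dsJ, hdec, if_pos (by exact_mod_cast hb1)]
      have hrn : r n ∈ Set.Ioo (a:ℝ) (b:ℝ) := hJ ▸ (dsR_spec c n).1
      refine ⟨n, ?_, ?_⟩
      · show dist x (dsCtr c n) < r n
        rw [hctr]
        exact lt_trans ha1 hrn.1
      · intro y hy
        have hy' : dist y (c i) < r n := by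
          have : dist y (dsCtr c n) < r n := hy
          rwa [hctr] at this
        apply hball
        have : dist y x ≤ dist y (c i) + dist x (c i) := dist_triangle_right y x (c i)
        have hd : dist y x < ε := by
          have h1 : (b:ℝ) < ε/2 := hb2
          have h2 : dist y (c i) < ε/2 := lt_trans (lt_trans hy' hrn.2) h1
          calc dist y x ≤ dist y (c i) + dist x (c i) := this
            _ < ε/2 + ε/4 := by linarith
            _ < ε := by linarith
        exact Metric.mem_ball.mpr hd
    have hUeq : U = ⋃₀ {V : Set X | (∃ n, V = dsS c r n false) ∧ V ⊆ U} := by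
      ext x
      constructor
      · intro hx
        obtain ⟨n, hx1, hx2⟩ := key x hx
        exact ⟨dsS c r n false, ⟨⟨n, rfl⟩, hx2⟩, hx1⟩
      · rintro ⟨V, ⟨_, hVU⟩, hxV⟩
        exact hVU hxV
    rw [hUeq]
    exact TopologicalSpace.GenerateOpen.sUnion _
      (fun V hV => by
        obtain ⟨⟨n, rfl⟩, -⟩ := hV
        exact TopologicalSpace.GenerateOpen.basic _ ⟨n, false, rfl⟩)

theorem exists_proper_dyadicSubbase (X : Type*) [MetricSpace X] [SeparableSpace X] :
    ∃ S : ℕ → Bool → Set X,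
      (∀ n a, IsOpen (S n a)) ∧
      (∀ n, S n false ∩ S n true = ∅) ∧
      ((inferInstance : TopologicalSpace X) =
        TopologicalSpace.generateFrom {U : Set X | ∃ n a, U = S n a}) ∧
      (∀ (dom : Finset ℕ) (σ : ℕ → Bool),
        dyadicClosed S dom σ = closure (dyadicOpen S dom σ)) := by
  rcases isEmpty_or_nonempty X with hX | hX
  · refine ⟨fun _ _ => ∅, fun _ _ => isOpen_empty, fun _ => Set.empty_inter _, ?_, ?_⟩
    · refine le_antisymm (le_generateFrom ?_) ?_
      · rintro s ⟨n, a, rfl⟩; exact isOpen_empty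
      · rw [TopologicalSpace.le_def]
        intro s _
        rw [Set.eq_empty_of_isEmpty s]
        exact @isOpen_empty _ (TopologicalSpace.generateFrom _)
    · intro dom σ
      rw [Set.eq_empty_of_isEmpty (dyadicClosed _ dom σ),
        Set.eq_empty_of_isEmpty (closure (dyadicOpen _ dom σ))]
  · haveI : SecondCountableTopology X := UniformSpace.secondCountable_of_separable X
    obtain ⟨c, hc⟩ := TopologicalSpace.exists_dense_seq X
    refine ⟨dsS c (dsR c), fun n a => dsS_isOpen c (dsR c) n a,
      fun n => dsS_disj c (dsR c) n, ds_generate c hc, fun dom σ => ?_⟩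
    obtain ⟨N, hN⟩ := dom.exists_nat_subset_range
    exact ds_proper c N dom hN σ
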